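/- If X is a random variable uniformly distributed on a set of size 2^F, and S_1,...,S_m are random variables with I(X; S_1,...,S_m) = 0 while H(X | S_1,...,S_n) = 0 for n > m, then H(S_{m+1},...,S_n) ≥ F. -/

import Mathlib

open scoped BigOperators

/-- Probability that random variable `X` takes value `x`, on a finite
probability space with mass function `p`. -/
noncomputable def probOf {Ω α : Type*} [Fintype Ω] [DecidableEq α]
    (p : Ω → ℝ) (X : Ω → α) (x : α) : ℝ :=
  ∑ ω, if X ω = x then p ω else 0

/-- Shannon entropy (in bits) of a random variable on a finite probability space. -/
noncomputable def entropy {Ω α : Type*} [Fintype Ω] [Fintype α] [DecidableEq α]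
    (p : Ω → ℝ) (X : Ω → α) : ℝ :=
  -∑ x, probOf p X x * Real.logb 2 (probOf p X x)

/-- Conditional entropy H(X | Y). -/
noncomputable def condEntropy {Ω α β : Type*} [Fintype Ω] [Fintype α] [DecidableEq α]
    [Fintype β] [DecidableEq β] (p : Ω → ℝ) (X : Ω → α) (Y : Ω → β) : ℝ :=
  entropy p (fun ω => (X ω, Y ω)) - entropy p Y

/-- Mutual information I(X ; Y). -/
noncomputable def mutualInfo {Ω α β : Type*} [Fintype Ω] [Fintype α] [DecidableEq α]
    [Fintype β] [DecidableEq β] (p : Ω → ℝ) (X : Ω → α) (Y : Ω → β) : ℝ :=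
  entropy p X - condEntropy p X Y

section aux
variable {Ω : Type*} [Fintype Ω] (p : Ω → ℝ)

lemma probOf_nonneg {α : Type*} [DecidableEq α] (h0 : ∀ ω, 0 ≤ p ω) (X : Ω → α) (x : α) :
    0 ≤ probOf p X x := by
  apply Finset.sum_nonneg; intro ω _; split <;> simp [h0 ω]

lemma sum_probOf {α : Type*} [Fintype α] [DecidableEq α] (X : Ω → α) :
    ∑ x, probOf p X x = ∑ ω, p ω := by
  unfold probOf
  rw [Finset.sum_comm]
  refine Finset.sum_congr rfl fun ω _ => ?_
  simp

/-- Grouping identity. -/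
lemma sum_probOf_comp_mul {α β : Type*} [Fintype α] [DecidableEq α] [Fintype β] [DecidableEq β]
    (X : Ω → α) (g : α → β) (f : β → ℝ) :
    ∑ y, probOf p (fun ω => g (X ω)) y * f y = ∑ x, probOf p X x * f (g x) := by
  unfold probOf
  simp_rw [Finset.sum_mul]
  rw [Finset.sum_comm, Finset.sum_comm (s := Finset.univ (α := α))]
  refine Finset.sum_congr rfl fun ω _ => ?_
  simp [ite_mul]

lemma probOf_le_probOf_comp {α β : Type*} [DecidableEq α] [DecidableEq β]
    (h0 : ∀ ω, 0 ≤ p ω) (X : Ω → α) (g : α → β) (x : α) :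
    probOf p X x ≤ probOf p (fun ω => g (X ω)) (g x) := by
  apply Finset.sum_le_sum
  intro ω _
  by_cases h : X ω = x
  · simp [h]
  · simp only [h, if_false]
    split <;> simp [h0 ω]

noncomputable def nent {Ω α : Type*} [Fintype Ω] [DecidableEq α] [Fintype α]
    (p : Ω → ℝ) (X : Ω → α) : ℝ :=
  -∑ x, probOf p X x * Real.log (probOf p X x)

lemma entropy_eq_nent {α : Type*} [Fintype α] [DecidableEq α] (X : Ω → α) :
    entropy p X = nent p X / Real.log 2 := by
  unfold entropy nent Real.logb
  rw [neg_div, Finset.sum_div]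
  congr 1
  refine Finset.sum_congr rfl fun x _ => ?_
  rw [mul_div_assoc]

lemma nent_comp_le {α β : Type*} [Fintype α] [DecidableEq α] [Fintype β] [DecidableEq β]
    (h0 : ∀ ω, 0 ≤ p ω) (X : Ω → α) (g : α → β) :
    nent p (fun ω => g (X ω)) ≤ nent p X := by
  unfold nent
  rw [sum_probOf_comp_mul p X g (fun y => Real.log (probOf p (fun ω => g (X ω)) y))]
  apply neg_le_neg
  apply Finset.sum_le_sum
  intro x _
  rcases eq_or_lt_of_le (probOf_nonneg p h0 X x) with h | h
  · simp [← h]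
  · exact mul_le_mul_of_nonneg_left
      (Real.log_le_log h (probOf_le_probOf_comp p h0 X g x)) (le_of_lt h)

lemma probOf_marginal_fst {α β : Type*} [Fintype α] [DecidableEq α] [Fintype β] [DecidableEq β]
    (A : Ω → α) (B : Ω → β) (a : α) :
    probOf p A a = ∑ b, probOf p (fun ω => (A ω, B ω)) (a, b) := by
  unfold probOf
  rw [Finset.sum_comm]
  refine Finset.sum_congr rfl fun ω _ => ?_
  by_cases h : A ω = a <;> simp [h, Prod.ext_iff]

lemma probOf_marginal_snd {α β : Type*} [Fintype α] [DecidableEq α] [Fintype β] [DecidableEq β]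
    (A : Ω → α) (B : Ω → β) (b : β) :
    probOf p B b = ∑ a, probOf p (fun ω => (A ω, B ω)) (a, b) := by
  unfold probOf
  rw [Finset.sum_comm]
  refine Finset.sum_congr rfl fun ω _ => ?_
  by_cases h : B ω = b <;> simp [h, Prod.ext_iff]

lemma nent_pair_le {α β : Type*} [Fintype α] [DecidableEq α] [Fintype β] [DecidableEq β]
    (h0 : ∀ ω, 0 ≤ p ω) (h1 : ∑ ω, p ω = 1) (A : Ω → α) (B : Ω → β) :
    nent p (fun ω => (A ω, B ω)) ≤ nent p A + nent p B := by
  unfold nent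
  rw [← neg_add, neg_le_neg_iff]
  set r : α × β → ℝ := probOf p (fun ω => (A ω, B ω)) with hr
  have hA : ∀ x : α, probOf p A x = probOf p (fun ω => (fun ω' => (A ω', B ω')) ω |>.1) x := by
    intro x; rfl
  -- rewrite marginal sums over pairs
  have e1 : ∑ a, probOf p A a * Real.log (probOf p A a)
      = ∑ x : α × β, r x * Real.log (probOf p A x.1) := by
    rw [← sum_probOf_comp_mul p (fun ω => (A ω, B ω)) Prod.fst
      (fun a => Real.log (probOf p A a))]
  have e2 : ∑ b, probOf p B b * Real.log (probOf p B b)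
      = ∑ x : α × β, r x * Real.log (probOf p B x.2) := by
    rw [← sum_probOf_comp_mul p (fun ω => (A ω, B ω)) Prod.snd
      (fun b => Real.log (probOf p B b))]
  rw [e1, e2, ← Finset.sum_add_distrib]
  have key : ∀ x : α × β,
      r x * Real.log (probOf p A x.1) + r x * Real.log (probOf p B x.2)
        - r x * Real.log (r x) ≤ probOf p A x.1 * probOf p B x.2 - r x := by
    intro x
    rcases eq_or_lt_of_le (probOf_nonneg p h0 (fun ω => (A ω, B ω)) x) with h | h
    · rw [hr, ← h]
      simp [mul_nonneg (probOf_nonneg p h0 A x.1) (probOf_nonneg p h0 B x.2)]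
    · have hAx : r x ≤ probOf p A x.1 :=
        probOf_le_probOf_comp p h0 (fun ω => (A ω, B ω)) Prod.fst x
      have hBx : r x ≤ probOf p B x.2 :=
        probOf_le_probOf_comp p h0 (fun ω => (A ω, B ω)) Prod.snd x
      have ha : 0 < probOf p A x.1 := lt_of_lt_of_le h hAx
      have hb : 0 < probOf p B x.2 := lt_of_lt_of_le h hBx
      have hlog : Real.log (probOf p A x.1) + Real.log (probOf p B x.2) - Real.log (r x)
          = Real.log (probOf p A x.1 * probOf p B x.2 / r x) := by
        rw [Real.log_div (by positivity) (ne_of_gt h), Real.log_mul (ne_of_gt ha) (ne_of_gt hb)]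
      have hle : Real.log (probOf p A x.1 * probOf p B x.2 / r x)
          ≤ probOf p A x.1 * probOf p B x.2 / r x - 1 :=
        Real.log_le_sub_one_of_pos (by positivity)
      have : r x * Real.log (probOf p A x.1 * probOf p B x.2 / r x)
          ≤ r x * (probOf p A x.1 * probOf p B x.2 / r x - 1) :=
        mul_le_mul_of_nonneg_left hle (le_of_lt h)
      have heq : r x * (probOf p A x.1 * probOf p B x.2 / r x - 1)
          = probOf p A x.1 * probOf p B x.2 - r x := by
        rw [mul_sub, mul_one, mul_div_assoc', mul_div_cancel_left₀ _ (ne_of_gt h)]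
      nlinarith [this, hlog, heq]
  have hsum : ∑ x : α × β, probOf p A x.1 * probOf p B x.2 = 1 := by
    rw [Fintype.sum_prod_type, ← Finset.sum_mul_sum, sum_probOf, sum_probOf, h1, mul_one]
  have hr1 : ∑ x : α × β, r x = 1 := by rw [hr, sum_probOf, h1]
  have hbig := Finset.sum_le_sum (fun x (_ : x ∈ Finset.univ) => key x)
  rw [Finset.sum_sub_distrib, Finset.sum_sub_distrib] at hbig
  linarith [hbig, hsum, hr1]

lemma entropy_comp_le {α β : Type*} [Fintype α] [DecidableEq α] [Fintype β] [DecidableEq β]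
    (h0 : ∀ ω, 0 ≤ p ω) (X : Ω → α) (g : α → β) :
    entropy p (fun ω => g (X ω)) ≤ entropy p X := by
  rw [entropy_eq_nent, entropy_eq_nent]
  exact div_le_div_of_nonneg_right (nent_comp_le p h0 X g) (Real.log_pos (by norm_num)).le

lemma entropy_pair_le {α β : Type*} [Fintype α] [DecidableEq α] [Fintype β] [DecidableEq β]
    (h0 : ∀ ω, 0 ≤ p ω) (h1 : ∑ ω, p ω = 1) (A : Ω → α) (B : Ω → β) :
    entropy p (fun ω => (A ω, B ω)) ≤ entropy p A + entropy p B := by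
  rw [entropy_eq_nent, entropy_eq_nent, entropy_eq_nent, ← add_div]
  exact div_le_div_of_nonneg_right (nent_pair_le p h0 h1 A B) (Real.log_pos (by norm_num)).le

end aux

lemma entropy_uniform {Ω : Type*} [Fintype Ω] (p : Ω → ℝ) (F : ℕ)
    (X : Ω → Fin (2 ^ F)) (hunif : ∀ x, probOf p X x = ((2 ^ F : ℕ) : ℝ)⁻¹) :
    entropy p X = F := by
  unfold entropy
  simp only [hunif]
  rw [Finset.sum_const, Finset.card_univ, Fintype.card_fin]
  push_cast
  rw [Real.logb_inv, Real.logb_pow, Real.logb_self_eq_one (by norm_num)]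
  have : (2 : ℝ) ^ F ≠ 0 := by positivity
  simp only [nsmul_eq_mul, Nat.cast_pow, Nat.cast_ofNat, mul_neg, neg_neg]
  field_simp

/-- If `X` is uniform on a set of size `2^F`, the first `m` shares are independent
of `X`, and all `n` shares (with `n > m`) determine `X`, then the remaining shares
`S_{m+1},…,S_n` have joint entropy at least `F`. -/
theorem shares_entropy_lower_bound
    {Ω σ : Type*} [Fintype Ω] [Fintype σ] [DecidableEq σ]
    (p : Ω → ℝ) (hp0 : ∀ ω, 0 ≤ p ω) (hp1 : ∑ ω, p ω = 1)
    (F n m : ℕ) (hmn : m < n)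
    (X : Ω → Fin (2 ^ F)) (S : ℕ → Ω → σ)
    (hunif : ∀ x, probOf p X x = ((2 ^ F : ℕ) : ℝ)⁻¹)
    (hindep : mutualInfo p X (fun ω => fun i : Finset.range m => S (i : ℕ) ω) = 0)
    (hrec : condEntropy p X (fun ω => fun i : Finset.range n => S (i : ℕ) ω) = 0) :
    entropy p (fun ω => fun i : Finset.Ico m n => S (i : ℕ) ω) ≥ (F : ℝ) := by
  set Sm : Ω → (Finset.range m → σ) := fun ω => fun i => S (i : ℕ) ω with hSm
  set Sn : Ω → (Finset.range n → σ) := fun ω => fun i => S (i : ℕ) ω with hSn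
  set SI : Ω → (Finset.Ico m n → σ) := fun ω => fun i => S (i : ℕ) ω with hSI
  have hX : entropy p X = F := entropy_uniform p F X hunif
  have hind : entropy p (fun ω => (X ω, Sm ω)) = entropy p X + entropy p Sm := by
    have := hindep
    simp only [mutualInfo, condEntropy] at this
    linarith
  have hre : entropy p (fun ω => (X ω, Sn ω)) = entropy p Sn := by
    have := hrec
    simp only [condEntropy] at this
    linarith
  -- (X, Sm) is a function of (X, Sn)
  have e1 : entropy p (fun ω => (X ω, Sm ω)) ≤ entropy p (fun ω => (X ω, Sn ω)) := by
    have := entropy_comp_le p hp0 (fun ω => (X ω, Sn ω))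
      (fun q => (q.1, fun i : Finset.range m => q.2 ⟨(i : ℕ), by
        have := Finset.mem_range.mp i.2
        exact Finset.mem_range.mpr (lt_trans this hmn)⟩))
    exact this
  -- Sn is a function of (Sm, SI)
  have e2 : entropy p Sn ≤ entropy p (fun ω => (Sm ω, SI ω)) := by
    have := entropy_comp_le p hp0 (fun ω => (Sm ω, SI ω))
      (fun q => fun i : Finset.range n => if h : (i : ℕ) < m then
          q.1 ⟨(i : ℕ), Finset.mem_range.mpr h⟩
        else
          q.2 ⟨(i : ℕ), Finset.mem_Ico.mpr ⟨le_of_not_gt h, Finset.mem_range.mp i.2⟩⟩)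
    refine le_trans (le_of_eq ?_) this
    congr 1
    funext ω
    funext i
    by_cases h : (i : ℕ) < m <;> simp [hSn, hSm, hSI, h]
  have e3 : entropy p (fun ω => (Sm ω, SI ω)) ≤ entropy p Sm + entropy p SI :=
    entropy_pair_le p hp0 hp1 Sm SI
  linarith
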